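/- Let T be a tree rooted at a leaf w, let p be a path whose peak s_p is an internal vertex of p with deg(s_p) <= 3, and let q, q' be two distinct paths, each with priority at most that of p (peak no farther from w, and if the peak equals s_p then it is not an endpoint of q or q'), and each edge-intersecting p. Then q and q' edge-intersect each other. -/

import Mathlib

set_option linter.unusedSectionVars false

namespace Stmt15Aux

open SimpleGraph Walk

variable {V : Type*} [DecidableEq V] {T : SimpleGraph V}

lemma tree_path_eq (hT : T.IsTree) {x y : V} {Q R : T.Walk x y}
    (hQ : Q.IsPath) (hR : R.IsPath) : Q = R :=
  congrArg Subtype.val (hT.IsAcyclic.path_unique ⟨Q, hQ⟩ ⟨R, hR⟩)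

lemma tree_path_length (hT : T.IsTree) {x y : V} {Q : T.Walk x y} (hQ : Q.IsPath) :
    Q.length = T.dist x y := by
  obtain ⟨R, hR⟩ := hT.isConnected.exists_walk_length_eq_dist x y
  have hRp : R.IsPath := R.isPath_of_length_eq_dist hR
  rw [tree_path_eq hT hQ hRp, hR]

section P

variable (hT : T.IsTree) (w sp : V) (P : ∀ v, T.Walk v w) (hP : ∀ v, (P v).IsPath)
include hT hP

/-- If `sp` lies on the canonical path from `z` but not from `z'`, and `z ~ z'`, then `z = sp`. -/
lemma stepE {z z' : V} (hadj : T.Adj z z') (hz : sp ∈ (P z).support)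
    (hz' : sp ∉ (P z').support) : z = sp := by
  by_cases hm : z ∈ (P z').support
  · have hd : (P z').dropUntil z hm = P z :=
      tree_path_eq hT ((hP z').dropUntil hm) (hP z)
    rw [← hd] at hz
    exact absurd ((P z').support_dropUntil_subset hm hz) hz'
  · have heq : P z = Walk.cons hadj (P z') :=
      tree_path_eq hT (hP z) ((hP z').cons hm)
    rw [heq, support_cons, List.mem_cons] at hz
    rcases hz with hz | hz
    · exact hz.symm
    · exact absurd hz hz'

/-- A walk from a "below" vertex to a "not below" vertex passes through `sp`. -/
lemma crossF : ∀ {v z : V} (W : T.Walk v z), sp ∈ (P v).support →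
    sp ∉ (P z).support → sp ∈ W.support := by
  intro v z W
  induction W with
  | nil => intro h1 h2; exact absurd h1 h2
  | @cons vv bb zz hadj W ih =>
    intro h1 h2
    by_cases hm : sp ∈ (P bb).support
    · exact List.mem_cons_of_mem _ (ih hm h2)
    · have hv := stepE hT w sp P hP hadj h1 hm
      rw [support_cons, List.mem_cons]
      exact Or.inl hv.symm

/-- A neighbor of `sp` that is at least as deep as `sp` is below `sp`. -/
lemma belowFirst {z₁ : V} (hadj : T.Adj sp z₁) (hd : T.dist sp w ≤ T.dist z₁ w) :
    sp ∈ (P z₁).support := by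
  by_cases hm : z₁ ∈ (P sp).support
  · exfalso
    have hsplit := (P sp).take_spec hm
    have hlen : (P sp).length
        = ((P sp).takeUntil z₁ hm).length + ((P sp).dropUntil z₁ hm).length := by
      conv_lhs => rw [← hsplit]
      exact length_append _ _
    have h1 : ((P sp).takeUntil z₁ hm).length = T.dist sp z₁ :=
      tree_path_length hT ((hP sp).takeUntil hm)
    have h2 : ((P sp).dropUntil z₁ hm).length = T.dist z₁ w :=
      tree_path_length hT ((hP sp).dropUntil hm)
    have h3 : (P sp).length = T.dist sp w := tree_path_length hT (hP sp)
    have h4 : 0 < T.dist sp z₁ := hT.isConnected.pos_dist_of_ne hadj.ne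
    omega
  · have heq : P z₁ = Walk.cons hadj.symm (P sp) :=
      tree_path_eq hT (hP z₁) ((hP sp).cons hm)
    rw [heq, support_cons]
    exact List.mem_cons_of_mem _ (P sp).start_mem_support

/-- "Below" propagates along a walk avoiding `sp`. -/
lemma belowFwd : ∀ {v z : V} (W : T.Walk v z), sp ∈ (P v).support →
    sp ∉ W.support → ∀ u ∈ W.support, sp ∈ (P u).support := by
  intro v z W
  induction W with
  | nil =>
    intro h1 _ u hu
    rw [support_nil, List.mem_singleton] at hu
    exact hu ▸ h1
  | @cons vv bb zz hadj W ih =>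
    intro h1 h2 u hu
    rw [support_cons, List.mem_cons] at h2 hu
    push_neg at h2
    have hvne : vv ≠ sp := fun h => h2.1 h.symm
    have hb' : sp ∈ (P bb).support := by
      by_contra hcon
      exact hvne (stepE hT w sp P hP hadj h1 hcon)
    rcases hu with rfl | hu
    · exact h1
    · exact ih hb' h2.2 u hu

/-- All vertices of a path starting at `sp` whose vertices are at least as deep as `sp`
are below `sp`. -/
lemma belowAll {z : V} (W : T.Walk sp z) (hW : W.IsPath)
    (hmin : ∀ u ∈ W.support, T.dist sp w ≤ T.dist u w) :
    ∀ u ∈ W.support, sp ∈ (P u).support := by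
  cases W with
  | nil =>
    intro u hu
    rw [support_nil, List.mem_singleton] at hu
    exact hu ▸ (P sp).start_mem_support
  | @cons _ b _ hadj W' =>
    rw [cons_isPath_iff] at hW
    have hb1 : sp ∈ (P b).support := by
      refine belowFirst hT w sp P hP hadj (hmin b ?_)
      rw [support_cons]
      exact List.mem_cons_of_mem _ W'.start_mem_support
    intro u hu
    rw [support_cons, List.mem_cons] at hu
    rcases hu with rfl | hu
    · exact (P u).start_mem_support
    · exact belowFwd hT w sp P hP W' hb1 hW.2 u hu

end P

/-- A walk between two of its support vertices, inside a given walk. -/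
lemma segBetween {v z x s : V} (W : T.Walk v z) (hx : x ∈ W.support) (hs : s ∈ W.support) :
    ∃ R : T.Walk x s, R.support ⊆ W.support := by
  by_cases hm : x ∈ (W.takeUntil s hs).support
  · exact ⟨(W.takeUntil s hs).dropUntil x hm, fun a ha =>
      W.support_takeUntil_subset hs ((W.takeUntil s hs).support_dropUntil_subset hm ha)⟩
  · have hx2 : x ∈ (W.dropUntil s hs).support := by
      have hspec := W.take_spec hs
      rw [← hspec, mem_support_append_iff] at hx
      exact hx.resolve_left hm
    refine ⟨((W.dropUntil s hs).takeUntil x hx2).reverse, fun a ha => ?_⟩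
    rw [support_reverse, List.mem_reverse] at ha
    exact W.support_dropUntil_subset hs ((W.dropUntil s hs).support_takeUntil_subset hx2 ha)

variable (hT : T.IsTree) (w sp : V) (P : ∀ v, T.Walk v w) (hP : ∀ v, (P v).IsPath)

include hT hP in
/-- `sp` cannot be the start of a path containing a vertex below `sp` (other than `sp`)
and a vertex not below `sp`. -/
lemma notEnd {dd x s : V} (W : T.Walk sp dd) (hW : W.IsPath)
    (hx : x ∈ W.support) (hxb : sp ∈ (P x).support) (hxne : x ≠ sp)
    (hs : s ∈ W.support) (hsb : sp ∉ (P s).support) : False := by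
  cases W with
  | nil =>
    rw [support_nil, List.mem_singleton] at hx
    exact hxne hx
  | cons hadj W' =>
    rw [cons_isPath_iff] at hW
    have hsne : s ≠ sp := fun h => hsb (h ▸ (P sp).start_mem_support)
    rw [support_cons, List.mem_cons] at hx hs
    have hx' := hx.resolve_left (fun h => hxne h)
    have hs' := hs.resolve_left (fun h => hsne h)
    obtain ⟨R, hR⟩ := segBetween W' hx' hs'
    exact hW.2 (hR (crossF hT w sp P hP R hxb hsb))

/-- A nontrivial walk has a first edge. -/
lemma firstEdge {u v : V} (W : T.Walk u v) (h : u ≠ v) :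
    ∃ z, T.Adj u z ∧ s(u, z) ∈ W.edges := by
  cases W with
  | nil => exact absurd rfl h
  | cons hadj W' => exact ⟨_, hadj, by rw [edges_cons]; exact List.mem_cons_self⟩

/-- An internal vertex of a path is incident to two distinct edges of the path. -/
lemma internalEdges {c d : V} (q : T.Walk c d) (hq : q.IsPath) (hsp : sp ∈ q.support)
    (hc : sp ≠ c) (hd : sp ≠ d) :
    ∃ z₁ z₂, z₁ ≠ z₂ ∧ T.Adj sp z₁ ∧ T.Adj sp z₂ ∧
      s(sp, z₁) ∈ q.edges ∧ s(sp, z₂) ∈ q.edges := by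
  obtain ⟨z₂, ha2, he2⟩ := firstEdge (q.dropUntil sp hsp) hd
  obtain ⟨z₁, ha1, he1⟩ := firstEdge (q.takeUntil sp hsp).reverse hc
  have he1' : s(sp, z₁) ∈ (q.takeUntil sp hsp).edges := by
    rw [edges_reverse, List.mem_reverse] at he1; exact he1
  have he1q : s(sp, z₁) ∈ q.edges := q.edges_takeUntil_subset hsp he1'
  have he2q : s(sp, z₂) ∈ q.edges := q.edges_dropUntil_subset hsp he2
  refine ⟨z₁, z₂, ?_, ha1, ha2, he1q, he2q⟩
  intro hzz
  subst hzz
  have hnodup : q.edges.Nodup := hq.isTrail.edges_nodup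
  have hspec := q.take_spec hsp
  rw [← hspec, edges_append] at hnodup
  exact (List.disjoint_of_nodup_append hnodup) he1' he2

/-- A walk between distinct endpoints decomposes as a cons. -/
lemma consDecomp {u v : V} (W : T.Walk u v) (h : u ≠ v) :
    ∃ z, ∃ ha : T.Adj u z, ∃ W' : T.Walk z v, W = Walk.cons ha W' := by
  cases W with
  | nil => exact absurd rfl h
  | cons ha W' => exact ⟨_, ha, W', rfl⟩

end Stmt15Aux

open SimpleGraph in
theorem stmt_15 {V : Type*} [Fintype V] [DecidableEq V] (T : SimpleGraph V)
    [DecidableRel T.Adj] (hT : T.IsTree) (w : V) (hw : T.degree w = 1)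
    {a b : V} (p : T.Walk a b) (hp : p.IsPath)
    (sp : V) (hsp : sp ∈ p.support)
    (hspmin : ∀ v ∈ p.support, T.dist sp w ≤ T.dist v w)
    (hint : sp ≠ a ∧ sp ≠ b) (hdegsp : T.degree sp ≤ 3)
    {c d c' d' : V} (q : T.Walk c d) (q' : T.Walk c' d')
    (hq : q.IsPath) (hq' : q'.IsPath)
    (hne : q.edges ≠ q'.edges)
    (sq : V) (hsq : sq ∈ q.support)
    (hsqmin : ∀ v ∈ q.support, T.dist sq w ≤ T.dist v w)
    (hqle : T.dist sq w ≤ T.dist sp w)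
    (hqend : sq = sp → sq ≠ c ∧ sq ≠ d)
    (sq' : V) (hsq' : sq' ∈ q'.support)
    (hsq'min : ∀ v ∈ q'.support, T.dist sq' w ≤ T.dist v w)
    (hq'le : T.dist sq' w ≤ T.dist sp w)
    (hq'end : sq' = sp → sq' ≠ c' ∧ sq' ≠ d')
    (hqint : ∃ e ∈ p.edges, e ∈ q.edges)
    (hq'int : ∃ e ∈ p.edges, e ∈ q'.edges) :
    ∃ e ∈ q.edges, e ∈ q'.edges := by
  classical
  have hex : ∀ v, ∃ Q : T.Walk v w, Q.IsPath := fun v => by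
    obtain ⟨R, hR⟩ := hT.isConnected.exists_walk_length_eq_dist v w
    exact ⟨R, R.isPath_of_length_eq_dist hR⟩
  choose P hP using hex
  obtain ⟨hna, hnb⟩ := hint
  obtain ⟨x, y, hxy, hax, hay, hexp, heyp⟩ := Stmt15Aux.internalEdges sp p hp hsp hna hnb
  have hxps : x ∈ p.support := p.snd_mem_support_of_mem_edges hexp
  have hyps : y ∈ p.support := p.snd_mem_support_of_mem_edges heyp
  -- sp ≠ w since sp has at least two neighbors
  have hspw : sp ≠ w := by
    intro h
    have hsub2 : ({x, y} : Finset V) ⊆ T.neighborFinset sp := by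
      intro t ht
      rw [Finset.mem_insert, Finset.mem_singleton] at ht
      rw [SimpleGraph.mem_neighborFinset]
      rcases ht with rfl | rfl
      · exact hax
      · exact hay
    have hc2 : ({x, y} : Finset V).card = 2 := Finset.card_pair hxy
    have hle2 := Finset.card_le_card hsub2
    rw [hc2, T.card_neighborFinset_eq_degree, h, hw] at hle2
    omega
  -- the up-neighbor u of sp
  have hPlen : (P sp).length = T.dist sp w := Stmt15Aux.tree_path_length hT (hP sp)
  obtain ⟨u, hau, W', hWeq⟩ := Stmt15Aux.consDecomp (P sp) hspw
  have hW' : W'.IsPath := by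
    have h0 := hP sp
    rw [hWeq, SimpleGraph.Walk.cons_isPath_iff] at h0
    exact h0.1
  have hWlen : W'.length = T.dist u w := Stmt15Aux.tree_path_length hT hW'
  have hulen : T.dist u w + 1 = T.dist sp w := by
    rw [hWeq] at hPlen
    simp only [SimpleGraph.Walk.length_cons] at hPlen
    omega
  have hux : u ≠ x := by
    intro h
    have h1 := hspmin x hxps
    rw [← h] at h1
    omega
  have huy : u ≠ y := by
    intro h
    have h1 := hspmin y hyps
    rw [← h] at h1
    omega
  -- every neighbor of sp is x, y, or u
  have hnbr : ∀ z, T.Adj sp z → z = x ∨ z = y ∨ z = u := by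
    intro z hz
    have hsub : ({x, y, u} : Finset V) ⊆ T.neighborFinset sp := by
      intro t ht
      simp only [Finset.mem_insert, Finset.mem_singleton] at ht
      rw [SimpleGraph.mem_neighborFinset]
      rcases ht with rfl | rfl | rfl
      exacts [hax, hay, hau]
    have h1 : y ∉ ({u} : Finset V) := by simp [huy.symm]
    have h2 : x ∉ ({y, u} : Finset V) := by simp [hxy, hux.symm]
    have hcard : ({x, y, u} : Finset V).card = 3 := by
      rw [Finset.card_insert_of_notMem h2, Finset.card_insert_of_notMem h1,
        Finset.card_singleton]
    have hle : (T.neighborFinset sp).card ≤ ({x, y, u} : Finset V).card := by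
      rw [hcard, T.card_neighborFinset_eq_degree]; exact hdegsp
    have heq := Finset.eq_of_subset_of_card_le hsub hle
    have hz2 : z ∈ T.neighborFinset sp := (T.mem_neighborFinset sp z).mpr hz
    rw [← heq] at hz2
    simpa using hz2
  -- every vertex of p is below sp
  have hBelowP : ∀ v ∈ p.support, sp ∈ (P v).support := by
    intro v hv
    have hspec := p.take_spec hsp
    rw [← hspec, SimpleGraph.Walk.mem_support_append_iff] at hv
    rcases hv with hv | hv
    · refine Stmt15Aux.belowAll hT w sp P hP (p.takeUntil sp hsp).reverse
        (hp.takeUntil hsp).reverse ?_ v ?_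
      · intro t ht
        rw [SimpleGraph.Walk.support_reverse, List.mem_reverse] at ht
        exact hspmin t (p.support_takeUntil_subset hsp ht)
      · rw [SimpleGraph.Walk.support_reverse, List.mem_reverse]; exact hv
    · exact Stmt15Aux.belowAll hT w sp P hP (p.dropUntil sp hsp) (hp.dropUntil hsp)
        (fun t ht => hspmin t (p.support_dropUntil_subset hsp ht)) v hv
  -- main claim, applied to each of q and q'
  have main : ∀ {c₀ d₀ : V} (qq : T.Walk c₀ d₀), qq.IsPath → (∃ e ∈ p.edges, e ∈ qq.edges) →
      ∀ s0 ∈ qq.support, T.dist s0 w ≤ T.dist sp w → (s0 = sp → s0 ≠ c₀ ∧ s0 ≠ d₀) →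
      ∃ z₁ z₂, z₁ ≠ z₂ ∧ T.Adj sp z₁ ∧ T.Adj sp z₂ ∧
        s(sp, z₁) ∈ qq.edges ∧ s(sp, z₂) ∈ qq.edges := by
    intro c₀ d₀ qq hqq hint0 s0 hs0 hle0 hend0
    by_cases hs0sp : s0 = sp
    · subst hs0sp
      obtain ⟨h1, h2⟩ := hend0 rfl
      exact Stmt15Aux.internalEdges s0 qq hqq hs0 h1 h2
    · obtain ⟨e0, he0p, he0q⟩ := hint0
      obtain ⟨x₀, y₀⟩ := e0
      have hx₀p : x₀ ∈ p.support := p.fst_mem_support_of_mem_edges he0p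
      have hy₀p : y₀ ∈ p.support := p.snd_mem_support_of_mem_edges he0p
      have hx₀q : x₀ ∈ qq.support := qq.fst_mem_support_of_mem_edges he0q
      have hy₀q : y₀ ∈ qq.support := qq.snd_mem_support_of_mem_edges he0q
      have hadj0 : T.Adj x₀ y₀ := p.adj_of_mem_edges he0p
      obtain ⟨xx, hxxq, hxxb, hxxne⟩ :
          ∃ xx, xx ∈ qq.support ∧ sp ∈ (P xx).support ∧ xx ≠ sp := by
        by_cases h : x₀ = sp
        · exact ⟨y₀, hy₀q, hBelowP y₀ hy₀p, fun hy => hadj0.ne (by rw [h, hy])⟩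
        · exact ⟨x₀, hx₀q, hBelowP x₀ hx₀p, h⟩
      have hnbs0 : sp ∉ (P s0).support := by
        intro hmem
        have h1 : ((P s0).takeUntil sp hmem).length = T.dist s0 sp :=
          Stmt15Aux.tree_path_length hT ((hP s0).takeUntil hmem)
        have h2 : ((P s0).dropUntil sp hmem).length = T.dist sp w :=
          Stmt15Aux.tree_path_length hT ((hP s0).dropUntil hmem)
        have h3 : (P s0).length = T.dist s0 w := Stmt15Aux.tree_path_length hT (hP s0)
        have h4 : (P s0).length
            = ((P s0).takeUntil sp hmem).length + ((P s0).dropUntil sp hmem).length := by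
          conv_lhs => rw [← (P s0).take_spec hmem]
          exact SimpleGraph.Walk.length_append _ _
        have h5 : 0 < T.dist s0 sp := hT.isConnected.pos_dist_of_ne hs0sp
        omega
      obtain ⟨R, hR⟩ := Stmt15Aux.segBetween qq hxxq hs0
      have hspq : sp ∈ qq.support := hR (Stmt15Aux.crossF hT w sp P hP R hxxb hnbs0)
      have hnc : sp ≠ c₀ := by
        intro h
        subst h
        exact Stmt15Aux.notEnd hT w sp P hP qq hqq hxxq hxxb hxxne hs0 hnbs0
      have hnd : sp ≠ d₀ := by
        intro h
        subst h
        refine Stmt15Aux.notEnd hT w sp P hP qq.reverse hqq.reverse ?_ hxxb hxxne ?_ hnbs0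
        · rw [SimpleGraph.Walk.support_reverse, List.mem_reverse]; exact hxxq
        · rw [SimpleGraph.Walk.support_reverse, List.mem_reverse]; exact hs0
      exact Stmt15Aux.internalEdges sp qq hqq hspq hnc hnd
  obtain ⟨z₁, z₂, h12, ha1, ha2, he1, he2⟩ := main q hq hqint sq hsq hqle hqend
  obtain ⟨z₁', z₂', h12', ha1', ha2', he1', he2'⟩ := main q' hq' hq'int sq' hsq' hq'le hq'end
  by_contra hcon
  push_neg at hcon
  have n11 : z₁ ≠ z₁' := fun h => hcon _ he1 (by rw [h]; exact he1')
  have n12 : z₁ ≠ z₂' := fun h => hcon _ he1 (by rw [h]; exact he2')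
  have n21 : z₂ ≠ z₁' := fun h => hcon _ he2 (by rw [h]; exact he1')
  have n22 : z₂ ≠ z₂' := fun h => hcon _ he2 (by rw [h]; exact he2')
  rcases hnbr z₁ ha1 with rfl | rfl | rfl <;>
    rcases hnbr z₂ ha2 with rfl | rfl | rfl <;>
      rcases hnbr z₁' ha1' with rfl | rfl | rfl <;>
        rcases hnbr z₂' ha2' with rfl | rfl | rfl <;>
          first
          | exact h12 rfl | exact h12' rfl | exact n11 rfl
          | exact n12 rfl | exact n21 rfl | exact n22 rfl
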